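/- For all integers k ≥ 1 and T ≥ 1, the winning probability satisfies the closed form: w(k,T) = Σ_{L=0}^{T-1} Σ_{B=0}^{min(L,k-1)} [(m2(L)+m3(L))/(1-m1(L))] · Σ_{b=(b_1,…,b_L)∈{0,1}^L with b_1+⋯+b_L=B} Σ_{g=(g_0,…,g_L) with every g_l ≥ 1 and (g_0-1)+⋯+(g_L-1)=(k-1)-B} [∏_{l=0}^{L-1} ( b_{l+1}·m3(l)/(1-m1(l)) + (1-b_{l+1})·m4(l)/(1-m1(l)) )] · [∏_{l=0}^{L} ( m2(l)/(1-m1(l)) )^{g_l-1}] · Σ_{T'=0}^{(T-1)-((k-1)+L-B)} Σ_{t=(t_0,…,t_L)∈ℕ^{L+1} with t_0+⋯+t_L=T'} ∏_{l=0}^{L} C(t_l+g_l-1, t_l)·m1(l)^{t_l}·(1-m1(l))^{g_l}, where C(·,·) denotes the binomial coefficient. -/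

import Mathlib

open Finset Finset.Nat

namespace CFWP
noncomputable section

lemma sum_tuple_succ {n N : ℕ} {M : Type*} [AddCommMonoid M] (f : (Fin (n+1) → ℕ) → M) :
    ∑ t ∈ antidiagonalTuple (n+1) N, f t
      = ∑ p ∈ antidiagonal N, ∑ v ∈ antidiagonalTuple n p.2, f (Fin.cons p.1 v) := by
  rw [Finset.sum_sigma']
  refine Finset.sum_nbij' (i := fun t => ⟨(t 0, ∑ i, Fin.tail t i), Fin.tail t⟩)
    (j := fun x => Fin.cons x.1.1 x.2) ?_ ?_ ?_ ?_ ?_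
  · intro t ht
    simp only [Finset.mem_sigma, Finset.HasAntidiagonal.mem_antidiagonal, mem_antidiagonalTuple] at *
    exact ⟨by rw [← ht, Fin.sum_univ_succ]; rfl, trivial⟩
  · intro x hx
    simp only [Finset.mem_sigma, Finset.HasAntidiagonal.mem_antidiagonal, mem_antidiagonalTuple] at *
    rw [Fin.sum_cons, hx.2, ← hx.1]
  · intro t ht; exact Fin.cons_self_tail t
  · intro x hx
    simp only [Finset.mem_sigma, Finset.mem_antidiagonal, mem_antidiagonalTuple] at hx
    refine Sigma.ext ?_ (by simp [Fin.tail_cons])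
    simp [Fin.tail_cons, hx.2]
  · intro t ht; rw [Fin.cons_self_tail]

private lemma shift (l : ℕ) : ∀ x : ℕ, l + (x + 1) = l + 1 + x := fun x => by omega

variable (a1 a2 a3 a4 : ℕ → ℝ)

/-- slice sum over self-loop counts with total `N`. -/
def ES (l n N : ℕ) (g : Fin n → ℕ) : ℝ :=
  ∑ t ∈ antidiagonalTuple n N, ∏ r : Fin n,
    (Nat.choose (t r + g r - 1) (t r) : ℝ) * a1 (l + r) ^ (t r) * (1 - a1 (l + r)) ^ (g r)

/-- cumulative time sum. -/
def TS (l n M : ℕ) (g : Fin n → ℕ) : ℝ := ∑ N ∈ range M, ES a1 l n N g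

lemma ES_cons (l n N : ℕ) (g : Fin (n+1) → ℕ) :
    ES a1 l (n+1) N g = ∑ p ∈ antidiagonal N,
      ((Nat.choose (p.1 + g 0 - 1) p.1 : ℝ) * a1 l ^ p.1 * (1 - a1 l) ^ (g 0))
        * ES a1 (l+1) n p.2 (Fin.tail g) := by
  unfold ES
  rw [sum_tuple_succ]
  refine Finset.sum_congr rfl fun p hp => ?_
  rw [Finset.mul_sum]
  refine Finset.sum_congr rfl fun v hv => ?_
  rw [Fin.prod_univ_succ]
  simp only [Fin.cons_zero, Fin.cons_succ, Fin.val_zero, add_zero, Fin.val_succ]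
  congr 1
  refine Finset.prod_congr rfl fun r _ => ?_
  rw [shift l]
  rfl

lemma ES_zero (l n : ℕ) (g : Fin n → ℕ) :
    ES a1 l n 0 g = ∏ r : Fin n, (1 - a1 (l + r)) ^ (g r) := by
  unfold ES
  rw [antidiagonalTuple_zero_right, Finset.sum_singleton]
  refine Finset.prod_congr rfl fun r _ => ?_
  simp

lemma ES_T1 (l n N : ℕ) (g' : Fin n → ℕ) :
    ES a1 l (n+1) (N+1) (Fin.cons 1 g')
      = a1 l * ES a1 l (n+1) N (Fin.cons 1 g') + (1 - a1 l) * ES a1 (l+1) n (N+1) g' := by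
  rw [ES_cons, ES_cons, sum_antidiagonal_succ]
  simp only [Fin.cons_zero, Fin.tail_cons, Nat.add_sub_cancel, Nat.choose_self, Nat.cast_one,
    one_mul, pow_zero, pow_one, Finset.mul_sum]
  rw [add_comm]
  congr 1
  refine Finset.sum_congr rfl fun p hp => ?_
  ring

lemma ES_T2 (l n N c : ℕ) (g' : Fin n → ℕ) :
    ES a1 l (n+1) (N+1) (Fin.cons (c+2) g')
      = a1 l * ES a1 l (n+1) N (Fin.cons (c+2) g')
        + (1 - a1 l) * ES a1 l (n+1) (N+1) (Fin.cons (c+1) g') := by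
  rw [ES_cons, ES_cons, ES_cons]
  simp only [Fin.cons_zero, Fin.tail_cons]
  rw [sum_antidiagonal_succ, sum_antidiagonal_succ, Finset.mul_sum, mul_add, Finset.mul_sum]
  conv_rhs => rw [add_left_comm]
  congr 1
  · simp only [Nat.choose_zero_right]
    norm_num
    ring
  · rw [← Finset.sum_add_distrib]
    refine Finset.sum_congr rfl fun p hp => ?_
    have h1 : p.1 + 1 + (c + 2) - 1 = (p.1 + c + 1) + 1 := by omega
    have h2 : p.1 + (c + 2) - 1 = p.1 + c + 1 := by omega
    have h3 : p.1 + 1 + (c + 1) - 1 = p.1 + c + 1 := by omega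
    rw [h1, h2, h3]
    have hch : (p.1 + c + 1 + 1).choose (p.1 + 1)
        = (p.1+c+1).choose p.1 + (p.1+c+1).choose (p.1+1) := Nat.choose_succ_succ _ _
    rw [hch]
    push_cast
    ring

lemma TS_zero (l n : ℕ) (g : Fin n → ℕ) : TS a1 l n 0 g = 0 := by simp [TS]

lemma TS_succ (l n M : ℕ) (g : Fin n → ℕ) :
    TS a1 l n (M+1) g = TS a1 l n M g + ES a1 l n M g := by simp [TS, Finset.sum_range_succ]

lemma TS_T1 (l n M : ℕ) (g' : Fin n → ℕ) :
    TS a1 l (n+1) M (Fin.cons 1 g')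
      = a1 l * TS a1 l (n+1) (M-1) (Fin.cons 1 g') + (1 - a1 l) * TS a1 (l+1) n M g' := by
  induction M with
  | zero => simp [TS_zero]
  | succ M ih =>
    cases M with
    | zero =>
      simp only [show (0+1:ℕ)-1 = 0 from rfl, TS_succ, TS_zero, zero_add, mul_zero, ES_zero,
        Fin.prod_univ_succ, Fin.cons_zero, Fin.cons_succ, Fin.val_zero, add_zero, pow_one,
        Fin.val_succ]
      congr 1
      refine Finset.prod_congr rfl fun r _ => ?_
      rw [shift l]
    | succ M' =>
      rw [TS_succ, ih, Nat.add_sub_cancel, Nat.add_sub_cancel, ES_T1,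
        TS_succ a1 (l+1) n (M'+1) g', TS_succ a1 (l+1) n M' g',
        TS_succ a1 l (n+1) M' (Fin.cons 1 g')]
      ring

lemma TS_T2 (l n M c : ℕ) (g' : Fin n → ℕ) :
    TS a1 l (n+1) M (Fin.cons (c+2) g')
      = a1 l * TS a1 l (n+1) (M-1) (Fin.cons (c+2) g')
        + (1 - a1 l) * TS a1 l (n+1) M (Fin.cons (c+1) g') := by
  induction M with
  | zero => simp [TS_zero]
  | succ M ih =>
    cases M with
    | zero =>
      simp only [show (0+1:ℕ)-1 = 0 from rfl, TS_succ, TS_zero, zero_add, mul_zero, ES_zero,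
        Fin.prod_univ_succ, Fin.cons_zero, Fin.cons_succ, Fin.val_zero, add_zero]
      ring
    | succ M' =>
      rw [TS_succ, ih, Nat.add_sub_cancel, Nat.add_sub_cancel, ES_T2,
        TS_succ a1 l (n+1) (M'+1) (Fin.cons (c+1) g'), TS_succ a1 l (n+1) M' (Fin.cons (c+1) g'),
        TS_succ a1 l (n+1) M' (Fin.cons (c+2) g')]
      ring

def Pg (l : ℕ) {n : ℕ} (g : Fin n → ℕ) : ℝ :=
  ∏ r : Fin n, (a2 (l + r) / (1 - a1 (l + r))) ^ (g r - 1)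

def Pb (l : ℕ) {L : ℕ} (b : Fin L → ℕ) : ℝ :=
  ∏ r : Fin L, ((b r : ℝ) * (a3 (l + r) / (1 - a1 (l + r)))
    + (1 - (b r : ℝ)) * (a4 (l + r) / (1 - a1 (l + r))))

def Gset (n N : ℕ) : Finset (Fin n → ℕ) := (antidiagonalTuple n N).filter fun g => ∀ r, 1 ≤ g r

def Bset (L B : ℕ) : Finset (Fin L → ℕ) := (antidiagonalTuple L B).filter fun b => ∀ r, b r ≤ 1

def Y (l n M N : ℕ) : ℝ := ∑ g ∈ Gset n N, Pg a1 a2 l g * TS a1 l n M g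

def Pbs (l L B : ℕ) : ℝ := ∑ b ∈ Bset L B, Pb a1 a3 a4 l b

lemma sum_filter_tuple_succ {n N : ℕ} (P : ℕ → Prop) [DecidablePred P] (f : (Fin (n+1) → ℕ) → ℝ) :
    ∑ v ∈ (antidiagonalTuple (n+1) N).filter (fun v => ∀ r, P (v r)), f v
      = ∑ p ∈ antidiagonal N, if P p.1 then
          ∑ v ∈ (antidiagonalTuple n p.2).filter (fun v => ∀ r, P (v r)), f (Fin.cons p.1 v)
        else 0 := by
  rw [Finset.sum_filter, sum_tuple_succ]
  refine Finset.sum_congr rfl fun p hp => ?_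
  have hiff : ∀ v : Fin n → ℕ,
      (∀ r : Fin (n+1), P (Fin.cons (α := fun _ => ℕ) p.1 v r)) ↔ (P p.1 ∧ ∀ r : Fin n, P (v r)) := by
    intro v
    constructor
    · intro hall
      exact ⟨by simpa using hall 0, fun r => by simpa using hall r.succ⟩
    · rintro ⟨h0, hs⟩ r
      refine Fin.cases ?_ ?_ r
      · simpa using h0
      · intro i; simpa using hs i
  by_cases hP : P p.1
  · simp only [hP, if_true, Finset.sum_filter]
    refine Finset.sum_congr rfl fun v hv => ?_
    rw [if_congr (hiff v) rfl rfl]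
    simp [hP]
  · rw [if_neg hP]
    refine Finset.sum_eq_zero fun v hv => ?_
    rw [if_congr (hiff v) rfl rfl]
    simp [hP]

lemma Gsum_split {n N : ℕ} (f : (Fin (n+1) → ℕ) → ℝ) :
    ∑ g ∈ Gset (n+1) (N+1), f g
      = ∑ g' ∈ Gset n N, f (Fin.cons 1 g')
        + ∑ g ∈ Gset (n+1) N, f (Fin.cons (g 0 + 1) (Fin.tail g)) := by
  rw [Gset, Gset, Gset, sum_filter_tuple_succ (P := fun x => 1 ≤ x),
    sum_filter_tuple_succ (P := fun x => 1 ≤ x), sum_antidiagonal_succ]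
  simp only [Fin.cons_zero, Fin.tail_cons]
  rw [if_neg (by omega : ¬ (1:ℕ) ≤ 0), zero_add]
  rw [Finset.Nat.sum_antidiagonal_eq_sum_range_succ_mk,
    Finset.Nat.sum_antidiagonal_eq_sum_range_succ_mk (f := fun p =>
      if 1 ≤ p.1 then
        ∑ v ∈ Finset.filter (fun v => ∀ (r : Fin n), 1 ≤ v r) (antidiagonalTuple n p.2),
          f (Fin.cons (p.1 + 1) v)
      else 0)]
  rw [Finset.sum_range_succ', Finset.sum_range_succ']
  simp only [Nat.le_add_left, if_true, Nat.not_succ_le_zero, if_false, Nat.sub_zero, zero_add,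
    add_zero]
  rw [if_pos (le_refl 1), if_neg (by omega : ¬ (1:ℕ) ≤ 0), add_zero]
  exact add_comm _ _

lemma Bsum_split0 {L : ℕ} (f : (Fin (L+1) → ℕ) → ℝ) :
    ∑ b ∈ Bset (L+1) 0, f b = ∑ b' ∈ Bset L 0, f (Fin.cons 0 b') := by
  rw [Bset, Bset, sum_filter_tuple_succ (P := fun x => x ≤ 1), antidiagonal_zero,
    Finset.sum_singleton]
  simp

lemma Bsum_split {L B : ℕ} (f : (Fin (L+1) → ℕ) → ℝ) :
    ∑ b ∈ Bset (L+1) (B+1), f b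
      = ∑ b' ∈ Bset L (B+1), f (Fin.cons 0 b') + ∑ b' ∈ Bset L B, f (Fin.cons 1 b') := by
  rw [Bset, Bset, Bset, sum_filter_tuple_succ (P := fun x => x ≤ 1), sum_antidiagonal_succ]
  rw [sum_antidiagonal_eq_sum_range_succ_mk, Finset.sum_range_succ']
  simp only [Nat.zero_le, if_true, Nat.sub_zero, zero_add]
  congr 1
  have : ∀ i ∈ range B, (if i + 1 + 1 ≤ 1 then
      ∑ v ∈ (antidiagonalTuple L (B - (i + 1))).filter (fun v => ∀ r, v r ≤ 1),
        f (Fin.cons (i + 1 + 1) v) else 0) = 0 := by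
    intro i hi
    rw [if_neg (by omega)]
  rw [Finset.sum_congr rfl this, Finset.sum_const_zero, zero_add, if_pos (by omega)]

lemma Gset_empty {n N : ℕ} (h : N < n) : Gset n N = ∅ := by
  rw [Finset.eq_empty_iff_forall_notMem]
  intro g hg
  rw [Gset, Finset.mem_filter, mem_antidiagonalTuple] at hg
  have : (Finset.univ : Finset (Fin n)).card • 1 ≤ ∑ r, g r :=
    Finset.card_nsmul_le_sum _ _ _ fun r _ => hg.2 r
  simp only [Finset.card_fin, smul_eq_mul, mul_one] at this
  omega

lemma Bset_empty {L B : ℕ} (h : L < B) : Bset L B = ∅ := by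
  rw [Finset.eq_empty_iff_forall_notMem]
  intro b hb
  rw [Bset, Finset.mem_filter, mem_antidiagonalTuple] at hb
  have : ∑ r, b r ≤ (Finset.univ : Finset (Fin L)).card • 1 :=
    Finset.sum_le_card_nsmul _ _ _ fun r _ => hb.2 r
  simp only [Finset.card_fin, smul_eq_mul, mul_one] at this
  omega

lemma Gset_zero : Gset 0 0 = {![]} := by
  rw [Gset, antidiagonalTuple_zero_zero]
  refine Finset.filter_true_of_mem fun g _ => ?_
  exact fun r => r.elim0

lemma Bset_zero : Bset 0 0 = {![]} := by
  rw [Bset, antidiagonalTuple_zero_zero]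
  refine Finset.filter_true_of_mem fun g _ => ?_
  exact fun r => r.elim0

lemma Pg_cons (l : ℕ) (x : ℕ) {n : ℕ} (g' : Fin n → ℕ) :
    Pg a1 a2 l (Fin.cons x g') = (a2 l / (1 - a1 l)) ^ (x - 1) * Pg a1 a2 (l+1) g' := by
  unfold Pg
  rw [Fin.prod_univ_succ]
  simp only [Fin.cons_zero, Fin.cons_succ, Fin.val_zero, add_zero, Fin.val_succ]
  congr 1
  refine Finset.prod_congr rfl fun r _ => ?_
  rw [shift l]

lemma Pb_cons (l : ℕ) (x : ℕ) {L : ℕ} (b' : Fin L → ℕ) :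
    Pb a1 a3 a4 l (Fin.cons x b')
      = ((x : ℝ) * (a3 l / (1 - a1 l)) + (1 - (x : ℝ)) * (a4 l / (1 - a1 l)))
        * Pb a1 a3 a4 (l+1) b' := by
  unfold Pb
  rw [Fin.prod_univ_succ]
  simp only [Fin.cons_zero, Fin.cons_succ, Fin.val_zero, add_zero, Fin.val_succ]
  congr 1
  refine Finset.prod_congr rfl fun r _ => ?_
  rw [shift l]

lemma Y_M0 (l n N : ℕ) : Y a1 a2 l n 0 N = 0 := by
  simp [Y, TS_zero]

lemma Y_rec (l n M N : ℕ) :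
    Y a1 a2 l (n+1) M (N+1)
      = a1 l * Y a1 a2 l (n+1) (M-1) (N+1)
        + (1 - a1 l) * Y a1 a2 (l+1) n M N
        + (1 - a1 l) * (a2 l / (1 - a1 l)) * Y a1 a2 l (n+1) M N := by
  unfold Y
  rw [Gsum_split, Gsum_split (f := fun g => Pg a1 a2 l g * TS a1 l (n+1) (M-1) g)]
  have h1 : ∀ g' ∈ Gset n N,
      Pg a1 a2 l (Fin.cons 1 g') * TS a1 l (n+1) M (Fin.cons 1 g')
        = a1 l * (Pg a1 a2 l (Fin.cons 1 g') * TS a1 l (n+1) (M-1) (Fin.cons 1 g'))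
          + (1 - a1 l) * (Pg a1 a2 (l+1) g' * TS a1 (l+1) n M g') := by
    intro g' _
    rw [TS_T1, Pg_cons]
    norm_num
    ring
  have h2 : ∀ g ∈ Gset (n+1) N,
      Pg a1 a2 l (Fin.cons (g 0 + 1) (Fin.tail g)) * TS a1 l (n+1) M (Fin.cons (g 0 + 1) (Fin.tail g))
        = a1 l * (Pg a1 a2 l (Fin.cons (g 0 + 1) (Fin.tail g))
              * TS a1 l (n+1) (M-1) (Fin.cons (g 0 + 1) (Fin.tail g)))
          + (1 - a1 l) * (a2 l / (1 - a1 l)) * (Pg a1 a2 l g * TS a1 l (n+1) M g) := by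
    intro g hg
    rw [Gset, Finset.mem_filter] at hg
    obtain ⟨c, hc⟩ : ∃ c, g 0 = c + 1 := ⟨g 0 - 1, by have := hg.2 0; omega⟩
    have hgc : Fin.cons (c + 1) (Fin.tail g) = g := by
      rw [← hc]; exact Fin.cons_self_tail g
    have hPg : Pg a1 a2 l g = (a2 l / (1 - a1 l)) ^ c * Pg a1 a2 (l+1) (Fin.tail g) := by
      conv_lhs => rw [← hgc]
      rw [Pg_cons, Nat.add_sub_cancel]
    have hTS : TS a1 l (n+1) M (Fin.cons (c + 2) (Fin.tail g))
        = a1 l * TS a1 l (n+1) (M-1) (Fin.cons (c + 2) (Fin.tail g))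
          + (1 - a1 l) * TS a1 l (n+1) M g := by
      rw [TS_T2, hgc]
    have hc2 : g 0 + 1 = c + 2 := by omega
    rw [hc2, hTS, hPg, Pg_cons, show c + 2 - 1 = c + 1 from rfl, pow_succ]
    ring
  rw [Finset.sum_congr rfl h1, Finset.sum_congr rfl h2, Finset.sum_add_distrib,
    Finset.sum_add_distrib, ← Finset.mul_sum, ← Finset.mul_sum, ← Finset.mul_sum,
    ← Finset.mul_sum]
  ring

lemma Pbs_zero (l : ℕ) : Pbs a1 a3 a4 l 0 0 = 1 := by
  rw [Pbs, Bset_zero, Finset.sum_singleton, Pb]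
  simp

lemma Pbs_empty (l : ℕ) {L B : ℕ} (h : L < B) : Pbs a1 a3 a4 l L B = 0 := by
  rw [Pbs, Bset_empty h, Finset.sum_empty]

lemma Pbs_split0 (l L : ℕ) :
    Pbs a1 a3 a4 l (L+1) 0 = (a4 l / (1 - a1 l)) * Pbs a1 a3 a4 (l+1) L 0 := by
  rw [Pbs, Pbs, Bsum_split0, Finset.mul_sum]
  refine Finset.sum_congr rfl fun b' _ => ?_
  rw [Pb_cons]
  norm_num

lemma Pbs_split (l L B : ℕ) :
    Pbs a1 a3 a4 l (L+1) (B+1)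
      = (a4 l / (1 - a1 l)) * Pbs a1 a3 a4 (l+1) L (B+1)
        + (a3 l / (1 - a1 l)) * Pbs a1 a3 a4 (l+1) L B := by
  rw [Pbs, Pbs, Pbs, Bsum_split, Finset.mul_sum, Finset.mul_sum]
  congr 1
  · refine Finset.sum_congr rfl fun b' _ => ?_
    rw [Pb_cons]; norm_num
  · refine Finset.sum_congr rfl fun b' _ => ?_
    rw [Pb_cons]; norm_num

def F (J l T : ℕ) : ℝ :=
  ∑ L ∈ range T, ∑ B ∈ range (min L J + 1),
    ((a2 (l + L) + a3 (l + L)) / (1 - a1 (l + L))) * Pbs a1 a3 a4 l L B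
      * Y a1 a2 l (L+1) (T - (J + L - B)) (J - B + (L+1))

def S : ℕ → ℕ → ℕ → ℝ
  | 0, _, _ => 1
  | _+1, _, 0 => 0
  | j+1, l, T+1 => a1 l * S (j+1) l T + a2 l * S j l T
      + a3 l * S j (l+1) T + a4 l * S (j+1) (l+1) T

lemma Y_empty (l n M N : ℕ) (h : N < n) : Y a1 a2 l n M N = 0 := by
  rw [Y, Gset_empty h, Finset.sum_empty]

lemma ES_nil_zero (l : ℕ) (v : Fin 0 → ℕ) : ES a1 l 0 0 v = 1 := by
  rw [ES, antidiagonalTuple_zero_zero, Finset.sum_singleton]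
  simp

lemma ES_nil_succ (l N : ℕ) (v : Fin 0 → ℕ) : ES a1 l 0 (N+1) v = 0 := by
  rw [ES, antidiagonalTuple_zero_succ, Finset.sum_empty]

lemma TS_nil (l M : ℕ) (v : Fin 0 → ℕ) : TS a1 l 0 (M+1) v = 1 := by
  induction M with
  | zero => rw [TS_succ, TS_zero, zero_add, ES_nil_zero]
  | succ M ih => rw [TS_succ, ih, ES_nil_succ, add_zero]

lemma Y_nil_pos (l M N : ℕ) (h : N ≠ 0) : Y a1 a2 l 0 M N = 0 := by
  obtain ⟨N', rfl⟩ : ∃ N', N = N' + 1 := ⟨N - 1, by omega⟩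
  rw [Y, Gset, antidiagonalTuple_zero_succ, Finset.filter_empty, Finset.sum_empty]

lemma Y_nil_zero (l M : ℕ) : Y a1 a2 l 0 (M+1) 0 = 1 := by
  rw [Y, Gset_zero, Finset.sum_singleton, TS_nil, Pg]
  simp

lemma FA (J l T : ℕ) :
    ∑ L ∈ range (T+1), ∑ B ∈ range (min L J + 1),
      ((a2 (l + L) + a3 (l + L)) / (1 - a1 (l + L))) * Pbs a1 a3 a4 l L B
        * Y a1 a2 l (L+1) ((T+1) - (J + L - B) - 1) (J - B + (L+1))
      = F a1 a2 a3 a4 J l T := by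
  have hd : ∀ D : ℕ, (T+1) - D - 1 = T - D := fun D => by omega
  simp only [hd]
  rw [Finset.sum_range_succ]
  have hrow : ∑ B ∈ range (min T J + 1),
      ((a2 (l + T) + a3 (l + T)) / (1 - a1 (l + T))) * Pbs a1 a3 a4 l T B
        * Y a1 a2 l (T+1) (T - (J + T - B)) (J - B + (T+1)) = 0 := by
    refine Finset.sum_eq_zero fun B hB => ?_
    rw [Finset.mem_range] at hB
    rw [show T - (J + T - B) = 0 by omega, Y_M0, mul_zero]
  rw [hrow, add_zero, F]

lemma FB0 (l T : ℕ) :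
    ∑ L ∈ range (T+1), ∑ B ∈ range (min L 0 + 1),
      ((a2 (l + L) + a3 (l + L)) / (1 - a1 (l + L))) * Pbs a1 a3 a4 l L B
        * Y a1 a2 l (L+1) ((T+1) - (0 + L - B)) (0 - B + L)
      = 0 := by
  refine Finset.sum_eq_zero fun L _ => Finset.sum_eq_zero fun B hB => ?_
  rw [Finset.mem_range] at hB
  have hB0 : B = 0 := by omega
  subst hB0
  rw [Y_empty a1 a2 l (L+1) _ _ (by omega), mul_zero]

lemma FB (J' l T : ℕ) :
    ∑ L ∈ range (T+1), ∑ B ∈ range (min L (J'+1) + 1),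
      ((a2 (l + L) + a3 (l + L)) / (1 - a1 (l + L))) * Pbs a1 a3 a4 l L B
        * Y a1 a2 l (L+1) ((T+1) - ((J'+1) + L - B)) ((J'+1) - B + L)
      = F a1 a2 a3 a4 J' l T := by
  rw [Finset.sum_range_succ]
  have hrow : ∑ B ∈ range (min T (J'+1) + 1),
      ((a2 (l + T) + a3 (l + T)) / (1 - a1 (l + T))) * Pbs a1 a3 a4 l T B
        * Y a1 a2 l (T+1) ((T+1) - ((J'+1) + T - B)) ((J'+1) - B + T) = 0 := by
    refine Finset.sum_eq_zero fun B hB => ?_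
    rw [Finset.mem_range] at hB
    have hBm : B ≤ min T (J'+1) := by omega
    have hB2 : B ≤ J' + 1 := le_trans hBm (min_le_right _ _)
    rcases le_or_gt B J' with hBJ | hBJ
    · rw [show (T+1) - ((J'+1) + T - B) = 0 by omega, Y_M0, mul_zero]
    · have hBe : B = J' + 1 := by omega
      subst hBe
      rw [show (J'+1) - (J'+1) + T = T by omega, Y_empty a1 a2 l (T+1) _ _ (by omega), mul_zero]
  rw [hrow, add_zero, F]
  refine Finset.sum_congr rfl fun L hL => ?_
  rw [Finset.mem_range] at hL
  -- adjust the B-range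
  rcases le_or_gt L J' with hLJ | hLJ
  · rw [show min L (J'+1) = min L J' by rw [min_eq_left (by omega), min_eq_left (by omega)]]
    refine Finset.sum_congr rfl fun B hB => ?_
    rw [Finset.mem_range] at hB
    rw [show (T+1) - ((J'+1) + L - B) = T - (J' + L - B) by omega,
      show (J'+1) - B + L = J' - B + (L+1) by omega]
  · rw [show min L (J'+1) + 1 = (min L J' + 1) + 1 by
        rw [min_eq_right (by omega), min_eq_right (by omega)], Finset.sum_range_succ]
    have hlast : ((a2 (l + L) + a3 (l + L)) / (1 - a1 (l + L))) * Pbs a1 a3 a4 l L (min L J' + 1)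
        * Y a1 a2 l (L+1) ((T+1) - ((J'+1) + L - (min L J' + 1))) ((J'+1) - (min L J' + 1) + L)
        = 0 := by
      rw [show (J'+1) - (min L J' + 1) + L = L by omega, Y_empty a1 a2 l (L+1) _ _ (by omega),
        mul_zero]
    rw [hlast, add_zero]
    refine Finset.sum_congr rfl fun B hB => ?_
    rw [Finset.mem_range] at hB
    rw [show (T+1) - ((J'+1) + L - B) = T - (J' + L - B) by omega,
      show (J'+1) - B + L = J' - B + (L+1) by omega]

lemma FC0 (h1 : ∀ x, (1:ℝ) - a1 x ≠ 0) (l T : ℕ) :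
    (1 - a1 l) * ∑ L ∈ range (T+1), ∑ B ∈ range (min L 0 + 1),
      ((a2 (l + L) + a3 (l + L)) / (1 - a1 (l + L))) * Pbs a1 a3 a4 l L B
        * Y a1 a2 (l+1) L ((T+1) - (0 + L - B)) (0 - B + L)
      = (a2 l + a3 l) + a4 l * F a1 a2 a3 a4 0 (l+1) T := by
  rw [Finset.sum_range_succ']
  have hrow0 : ∑ B ∈ range (min 0 0 + 1),
      ((a2 (l + 0) + a3 (l + 0)) / (1 - a1 (l + 0))) * Pbs a1 a3 a4 l 0 B
        * Y a1 a2 (l+1) 0 ((T+1) - (0 + 0 - B)) (0 - B + 0)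
      = (a2 l + a3 l) / (1 - a1 l) := by
    rw [Nat.min_zero, show (0:ℕ)+1 = 1 by rfl, Finset.sum_range_one]
    rw [Pbs_zero, show (T+1) - (0 + 0 - 0) = T + 1 by omega, show 0 - 0 + 0 = 0 by omega,
      Y_nil_zero, add_zero, mul_one, mul_one]
  rw [hrow0]
  have hrow : ∀ L' : ℕ, ∑ B ∈ range (min (L'+1) 0 + 1),
      ((a2 (l + (L'+1)) + a3 (l + (L'+1))) / (1 - a1 (l + (L'+1)))) * Pbs a1 a3 a4 l (L'+1) B
        * Y a1 a2 (l+1) (L'+1) ((T+1) - (0 + (L'+1) - B)) (0 - B + (L'+1))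
      = (a4 l / (1 - a1 l)) * (∑ B ∈ range (min L' 0 + 1),
          ((a2 ((l+1) + L') + a3 ((l+1) + L')) / (1 - a1 ((l+1) + L')))
          * Pbs a1 a3 a4 (l+1) L' B
          * Y a1 a2 (l+1) (L'+1) (T - (0 + L' - B)) (0 - B + (L'+1))) := by
    intro L'
    rw [Nat.min_zero, Nat.min_zero, show (0:ℕ)+1 = 1 by rfl, Finset.sum_range_one,
      Finset.sum_range_one]
    rw [Pbs_split0, shift l L', show (T+1) - (0 + (L'+1) - 0) = T - (0 + L' - 0) by omega]
    ring
  rw [Finset.sum_congr rfl fun L' _ => hrow L', ← Finset.mul_sum]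
  rw [mul_add, ← mul_assoc,
    show (1 - a1 l) * (a4 l / (1 - a1 l)) = a4 l by field_simp [h1 l],
    show (1 - a1 l) * ((a2 l + a3 l) / (1 - a1 l)) = a2 l + a3 l by field_simp [h1 l], F]
  ring

lemma bridge (J' l L' T : ℕ) :
    ∑ B ∈ range (min L' J' + 1 + 1),
      ((a2 ((l+1) + L') + a3 ((l+1) + L')) / (1 - a1 ((l+1) + L')))
        * Pbs a1 a3 a4 (l+1) L' B
        * Y a1 a2 (l+1) (L'+1) (T - ((J'+1) + L' - B)) ((J'+1) - B + (L'+1))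
      = ∑ B ∈ range (min L' (J'+1) + 1),
      ((a2 ((l+1) + L') + a3 ((l+1) + L')) / (1 - a1 ((l+1) + L')))
        * Pbs a1 a3 a4 (l+1) L' B
        * Y a1 a2 (l+1) (L'+1) (T - ((J'+1) + L' - B)) ((J'+1) - B + (L'+1)) := by
  rcases le_or_gt L' J' with hLJ | hLJ
  · rw [show min L' J' + 1 + 1 = (min L' (J'+1) + 1) + 1 by
      rw [min_eq_left (by omega), min_eq_left (by omega)], Finset.sum_range_succ]
    have : Pbs a1 a3 a4 (l+1) L' (min L' (J'+1) + 1) = 0 := by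
      rw [min_eq_left (by omega)]
      exact Pbs_empty a1 a3 a4 _ (by omega)
    rw [this, mul_zero, zero_mul, add_zero]
  · rw [show min L' J' + 1 + 1 = min L' (J'+1) + 1 by
      rw [min_eq_right (by omega), min_eq_right (by omega)]]

lemma FCs (h1 : ∀ x, (1:ℝ) - a1 x ≠ 0) (J' l T : ℕ) :
    (1 - a1 l) * ∑ L ∈ range (T+1), ∑ B ∈ range (min L (J'+1) + 1),
      ((a2 (l + L) + a3 (l + L)) / (1 - a1 (l + L))) * Pbs a1 a3 a4 l L B
        * Y a1 a2 (l+1) L ((T+1) - ((J'+1) + L - B)) ((J'+1) - B + L)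
      = a4 l * F a1 a2 a3 a4 (J'+1) (l+1) T + a3 l * F a1 a2 a3 a4 J' (l+1) T := by
  rw [Finset.sum_range_succ']
  have hrow0 : ∑ B ∈ range (min 0 (J'+1) + 1),
      ((a2 (l + 0) + a3 (l + 0)) / (1 - a1 (l + 0))) * Pbs a1 a3 a4 l 0 B
        * Y a1 a2 (l+1) 0 ((T+1) - ((J'+1) + 0 - B)) ((J'+1) - B + 0) = 0 := by
    refine Finset.sum_eq_zero fun B hB => ?_
    rw [Finset.mem_range] at hB
    have hB0 : B = 0 := by omega
    subst hB0
    rw [Y_nil_pos a1 a2 (l+1) _ _ (by omega), mul_zero]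
  rw [hrow0, add_zero]
  have hrow : ∀ L' : ℕ, ∑ B ∈ range (min (L'+1) (J'+1) + 1),
      ((a2 (l + (L'+1)) + a3 (l + (L'+1))) / (1 - a1 (l + (L'+1)))) * Pbs a1 a3 a4 l (L'+1) B
        * Y a1 a2 (l+1) (L'+1) ((T+1) - ((J'+1) + (L'+1) - B)) ((J'+1) - B + (L'+1))
      = (a4 l / (1 - a1 l)) * (∑ B ∈ range (min L' (J'+1) + 1),
          ((a2 ((l+1) + L') + a3 ((l+1) + L')) / (1 - a1 ((l+1) + L')))
            * Pbs a1 a3 a4 (l+1) L' B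
            * Y a1 a2 (l+1) (L'+1) (T - ((J'+1) + L' - B)) ((J'+1) - B + (L'+1)))
        + (a3 l / (1 - a1 l)) * (∑ B ∈ range (min L' J' + 1),
          ((a2 ((l+1) + L') + a3 ((l+1) + L')) / (1 - a1 ((l+1) + L')))
            * Pbs a1 a3 a4 (l+1) L' B
            * Y a1 a2 (l+1) (L'+1) (T - (J' + L' - B)) (J' - B + (L'+1))) := by
    intro L'
    rw [Nat.succ_min_succ, Finset.sum_range_succ']
    have hterm : ∀ B'' ∈ range (min L' J' + 1),
        ((a2 (l + (L'+1)) + a3 (l + (L'+1))) / (1 - a1 (l + (L'+1))))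
          * Pbs a1 a3 a4 l (L'+1) (B''+1)
          * Y a1 a2 (l+1) (L'+1) ((T+1) - ((J'+1) + (L'+1) - (B''+1))) ((J'+1) - (B''+1) + (L'+1))
        = (a4 l / (1 - a1 l)) * (((a2 ((l+1) + L') + a3 ((l+1) + L')) / (1 - a1 ((l+1) + L')))
            * Pbs a1 a3 a4 (l+1) L' (B''+1)
            * Y a1 a2 (l+1) (L'+1) (T - ((J'+1) + L' - (B''+1))) ((J'+1) - (B''+1) + (L'+1)))
          + (a3 l / (1 - a1 l)) * (((a2 ((l+1) + L') + a3 ((l+1) + L')) / (1 - a1 ((l+1) + L')))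
            * Pbs a1 a3 a4 (l+1) L' B''
            * Y a1 a2 (l+1) (L'+1) (T - (J' + L' - B'')) (J' - B'' + (L'+1))) := by
      intro B'' hB
      rw [Finset.mem_range] at hB
      rw [Pbs_split, shift l L',
        show (T+1) - ((J'+1) + (L'+1) - (B''+1)) = T - ((J'+1) + L' - (B''+1)) by omega,
        show (J'+1) - (B''+1) + (L'+1) = J' - B'' + (L'+1) by omega,
        show (J'+1) + L' - (B''+1) = J' + L' - B'' by omega]
      ring
    rw [Finset.sum_congr rfl hterm, Finset.sum_add_distrib, ← Finset.mul_sum, ← Finset.mul_sum]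
    have hzero : ((a2 (l + (L'+1)) + a3 (l + (L'+1))) / (1 - a1 (l + (L'+1))))
        * Pbs a1 a3 a4 l (L'+1) 0
        * Y a1 a2 (l+1) (L'+1) ((T+1) - ((J'+1) + (L'+1) - 0)) ((J'+1) - 0 + (L'+1))
        = (a4 l / (1 - a1 l)) * (((a2 ((l+1) + L') + a3 ((l+1) + L')) / (1 - a1 ((l+1) + L')))
            * Pbs a1 a3 a4 (l+1) L' 0
            * Y a1 a2 (l+1) (L'+1) (T - ((J'+1) + L' - 0)) ((J'+1) - 0 + (L'+1))) := by
      rw [Pbs_split0, shift l L',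
        show (T+1) - ((J'+1) + (L'+1) - 0) = T - ((J'+1) + L' - 0) by omega]
      ring
    rw [hzero, add_right_comm, ← mul_add]
    congr 2
    rw [← Finset.sum_range_succ'
      (f := fun B => ((a2 ((l+1) + L') + a3 ((l+1) + L')) / (1 - a1 ((l+1) + L')))
        * Pbs a1 a3 a4 (l+1) L' B
        * Y a1 a2 (l+1) (L'+1) (T - ((J'+1) + L' - B)) ((J'+1) - B + (L'+1)))]
    exact bridge a1 a2 a3 a4 J' l L' T
  rw [Finset.sum_congr rfl fun L' _ => hrow L', Finset.sum_add_distrib, ← Finset.mul_sum,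
    ← Finset.mul_sum, mul_add, ← mul_assoc, ← mul_assoc,
    show (1 - a1 l) * (a4 l / (1 - a1 l)) = a4 l by field_simp [h1 l],
    show (1 - a1 l) * (a3 l / (1 - a1 l)) = a3 l by field_simp [h1 l], F, F]

lemma star (h1 : ∀ x, (1:ℝ) - a1 x ≠ 0) (J l T : ℕ) :
    F a1 a2 a3 a4 J l (T+1)
      = a1 l * F a1 a2 a3 a4 J l T + a4 l * F a1 a2 a3 a4 J (l+1) T
        + (if J = 0 then a2 l + a3 l
           else a2 l * F a1 a2 a3 a4 (J-1) l T + a3 l * F a1 a2 a3 a4 (J-1) (l+1) T) := by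
  have hq : (1 - a1 l) * (a2 l / (1 - a1 l)) = a2 l := by field_simp [h1 l]
  have hsplit : ∀ L B : ℕ,
      ((a2 (l + L) + a3 (l + L)) / (1 - a1 (l + L))) * Pbs a1 a3 a4 l L B
        * Y a1 a2 l (L+1) ((T+1) - (J + L - B)) (J - B + (L+1))
      = a1 l * (((a2 (l + L) + a3 (l + L)) / (1 - a1 (l + L))) * Pbs a1 a3 a4 l L B
            * Y a1 a2 l (L+1) ((T+1) - (J + L - B) - 1) (J - B + (L+1)))
        + (1 - a1 l) * (((a2 (l + L) + a3 (l + L)) / (1 - a1 (l + L))) * Pbs a1 a3 a4 l L B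
            * Y a1 a2 (l+1) L ((T+1) - (J + L - B)) (J - B + L))
        + a2 l * (((a2 (l + L) + a3 (l + L)) / (1 - a1 (l + L))) * Pbs a1 a3 a4 l L B
            * Y a1 a2 l (L+1) ((T+1) - (J + L - B)) (J - B + L)) := by
    intro L B
    rw [show J - B + (L+1) = (J - B + L) + 1 by omega, Y_rec, hq,
      show (J - B + L) + 1 = J - B + (L+1) by omega]
    ring
  conv_lhs => rw [F]
  rw [Finset.sum_congr rfl (fun L _ => Finset.sum_congr rfl (fun B _ => hsplit L B))]
  simp only [Finset.sum_add_distrib, ← Finset.mul_sum]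
  rw [FA]
  cases J with
  | zero =>
    rw [if_pos rfl, FB0, FC0 a1 a2 a3 a4 h1 l T, mul_zero]
    ring
  | succ J' =>
    rw [if_neg (by omega), FB, FCs a1 a2 a3 a4 h1 J' l T]
    simp only [Nat.add_sub_cancel]
    ring

lemma S_eq_F (h1 : ∀ x, (1:ℝ) - a1 x ≠ 0) : ∀ T j l : ℕ,
    S a1 a2 a3 a4 (j+1) l T = F a1 a2 a3 a4 j l T := by
  intro T
  induction T with
  | zero => intro j l; simp [S, F]
  | succ T ih =>
    intro j l
    have hS : S a1 a2 a3 a4 (j+1) l (T+1)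
        = a1 l * S a1 a2 a3 a4 (j+1) l T + a2 l * S a1 a2 a3 a4 j l T
          + a3 l * S a1 a2 a3 a4 j (l+1) T + a4 l * S a1 a2 a3 a4 (j+1) (l+1) T := by
      simp [S]
    rw [hS, star a1 a2 a3 a4 h1 j l T]
    cases j with
    | zero =>
      rw [if_pos rfl, ih 0 l, ih 0 (l+1), show S a1 a2 a3 a4 0 l T = 1 by simp [S],
        show S a1 a2 a3 a4 0 (l+1) T = 1 by simp [S]]
      ring
    | succ j' =>
      rw [if_neg (by omega), ih (j'+1) l, ih (j'+1) (l+1), ih j' l, ih j' (l+1)]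
      simp only [Nat.add_sub_cancel]
      ring

end
end CFWP

/-- **Closed form winning probability (Theorem 2).**
The winning probability `w(k,T) = W 0 0 T` equals the closed-form sum over all
paths (levels `L`, number of diagonal transitions `B`, diagonal/vertical pattern `b`,
horizontal run lengths `g` with `g_l ≥ 1`, and self-loop counts `t`). -/
theorem closed_form_winning_probability
    (p h γ : ℝ) (hp : 0 < p) (hh : 0 ≤ h) (hph : p + h ≤ 1)
    (hγ0 : 0 < γ) (hγ1 : γ < 1)
    (f : ℕ → ℝ) (hf0 : ∀ l, 0 ≤ f l) (hf1 : ∀ l, f l ≤ 1)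
    (m1 m2 m3 m4 : ℕ → ℝ)
    (hm1 : ∀ l, m1 l = f l * (1 - γ) + (1 - f l) * (1 - γ) * (1 - p - h))
    (hm2 : ∀ l, m2 l = (1 - f l) * (1 - γ) * p)
    (hm3 : ∀ l, m3 l = (1 - f l) * γ * p)
    (hm4 : ∀ l, m4 l = (1 - f l) * (1 - γ) * h + f l * γ + (1 - f l) * γ * (1 - p))
    (k : ℕ) (hk : 1 ≤ k)
    (W : ℕ → ℕ → ℕ → ℝ)
    (hWwin : ∀ i l t, k ≤ i → W i l t = 1)
    (hWzero : ∀ i l, i < k → W i l 0 = 0)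
    (hWrec : ∀ i l t, i < k →
      W i l (t + 1) = m1 l * W i l t + m2 l * W (i + 1) l t
        + m3 l * W (i + 1) (l + 1) t + m4 l * W i (l + 1) t)
    (T : ℕ) (hT : 1 ≤ T) :
    W 0 0 T =
      ∑ L ∈ Finset.range T, ∑ B ∈ Finset.range (min L (k - 1) + 1),
        ((m2 L + m3 L) / (1 - m1 L)) *
        ∑ b ∈ (Finset.Nat.antidiagonalTuple L B).filter (fun b => ∀ l, b l ≤ 1),
          ∑ g ∈ (Finset.Nat.antidiagonalTuple (L + 1) ((k - 1) - B + (L + 1))).filter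
              (fun g => ∀ l, 1 ≤ g l),
            (∏ l : Fin L, ((b l : ℝ) * (m3 l.1 / (1 - m1 l.1))
                + (1 - (b l : ℝ)) * (m4 l.1 / (1 - m1 l.1)))) *
            (∏ l : Fin (L + 1), (m2 l.1 / (1 - m1 l.1)) ^ (g l - 1)) *
            (∑ T' ∈ Finset.range (T - ((k - 1) + L - B)),
              ∑ t ∈ Finset.Nat.antidiagonalTuple (L + 1) T',
                ∏ l : Fin (L + 1),
                  (Nat.choose (t l + g l - 1) (t l) : ℝ) * m1 l.1 ^ (t l)
                    * (1 - m1 l.1) ^ (g l)) := by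
  classical
  have h1m : ∀ x, (1:ℝ) - m1 x ≠ 0 := by
    intro x
    have h0 := hf0 x
    have hx := hf1 x
    rw [hm1 x]
    have key : 1 - (f x * (1-γ) + (1 - f x) * (1-γ) * (1-p-h))
        = γ + (1 - f x) * (1-γ) * (p+h) := by ring
    rw [key]
    have hprod : (0:ℝ) ≤ (1 - f x) * (1 - γ) * (p + h) :=
      mul_nonneg (mul_nonneg (by linarith) (by linarith)) (by linarith)
    exact ne_of_gt (by linarith)
  have hW : ∀ T' i lv, W i lv T' = CFWP.S m1 m2 m3 m4 (k - i) lv T' := by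
    intro T'
    induction T' with
    | zero =>
      intro i lv
      rcases le_or_gt k i with hki | hki
      · rw [hWwin i lv 0 hki, show k - i = 0 by omega]
        simp [CFWP.S]
      · rw [hWzero i lv hki]
        obtain ⟨j, hj⟩ : ∃ j, k - i = j + 1 := ⟨k - i - 1, by omega⟩
        rw [hj]
        simp [CFWP.S]
    | succ T' ih =>
      intro i lv
      rcases le_or_gt k i with hki | hki
      · rw [hWwin i lv (T'+1) hki, show k - i = 0 by omega]
        simp [CFWP.S]
      · rw [hWrec i lv T' hki]
        obtain ⟨j, hj⟩ : ∃ j, k - i = j + 1 := ⟨k - i - 1, by omega⟩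
        rw [ih i lv, ih (i+1) lv, ih (i+1) (lv+1), ih i (lv+1), hj,
          show k - (i+1) = j by omega]
        have hS : CFWP.S m1 m2 m3 m4 (j+1) lv (T'+1)
            = m1 lv * CFWP.S m1 m2 m3 m4 (j+1) lv T' + m2 lv * CFWP.S m1 m2 m3 m4 j lv T'
              + m3 lv * CFWP.S m1 m2 m3 m4 j (lv+1) T'
              + m4 lv * CFWP.S m1 m2 m3 m4 (j+1) (lv+1) T' := by
          simp [CFWP.S]
        rw [hS]
  rw [hW T 0 0, show k - 0 = (k-1)+1 by omega, CFWP.S_eq_F m1 m2 m3 m4 h1m T (k-1) 0, CFWP.F]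
  refine Finset.sum_congr rfl fun L hL => Finset.sum_congr rfl fun B hB => ?_
  rw [mul_assoc, CFWP.Pbs, CFWP.Y, Finset.sum_mul_sum]
  simp only [zero_add]
  congr 1
  refine Finset.sum_congr rfl fun b hb => Finset.sum_congr rfl fun g hg => ?_
  rw [CFWP.Pb, CFWP.Pg, CFWP.TS]
  simp only [CFWP.ES, zero_add]
  rw [← mul_assoc]
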